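/- Let G = (V, E, w) be a weighted directed graph with no negative cycle, s ∈ V, and h ≥ 2. Let C ⊆ V be a set of vertices that hits (intersects) the vertex set of the lexicographically smallest shortest ⌊h/2⌋-hop path with exactly ⌊h/2⌋ edges between every pair of vertices for which such a path exists. Define a complete graph H on vertex set C ∪ {s} with edge weights w_H(x,y) = d_G^h(x,y). Then for every t ∈ V, d_G(s,t) = min over x ∈ C ∪ {s} of (d_H(s,x) + d_G^h(x,t)). -/

import Mathlib

def cycleEdges {V : Type*} (l : List V) : List (V × V) := l.zip (l.rotate 1)

def IsCycle {V : Type*} (E : V → V → Prop) (l : List V) : Prop :=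
  l ≠ [] ∧ ∀ p ∈ cycleEdges l, E p.1 p.2

def cycleWeight {V : Type*} (w : V → V → ℝ) (l : List V) : ℝ :=
  ((cycleEdges l).map fun p => w p.1 p.2).sum

def IsWalk {V : Type*} (E : V → V → Prop) (a b : V) (l : List V) : Prop :=
  l ≠ [] ∧ l.head? = some a ∧ l.getLast? = some b ∧ l.Chain' E

def walkWeight {V : Type*} (w : V → V → ℝ) (l : List V) : ℝ :=
  ((l.zip l.tail).map fun p => w p.1 p.2).sum

def IsPath {V : Type*} (E : V → V → Prop) (a b : V) (l : List V) : Prop :=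
  IsWalk E a b l ∧ l.Nodup

noncomputable def pathDist {V : Type*} (E : V → V → Prop) (w : V → V → ℝ) (a b : V) : EReal :=
  sInf {x : EReal | ∃ l, IsPath E a b l ∧ (walkWeight w l : EReal) = x}

noncomputable def hopDist {V : Type*} (E : V → V → Prop) (w : V → V → ℝ) (h : ℕ)
    (a b : V) : EReal :=
  sInf {x : EReal | ∃ l, IsPath E a b l ∧ l.length - 1 ≤ h ∧ (walkWeight w l : EReal) = x}

/-- Shortest-path distance in the complete graph `H` on vertex set `Cs`, whose
edge `(x, y)` has weight `hopDist E w h x y`. -/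
noncomputable def auxDist {V : Type*} (E : V → V → Prop) (w : V → V → ℝ) (h : ℕ)
    (Cs : Set V) (a b : V) : EReal :=
  sInf {x : EReal | ∃ l : List V, (∀ v ∈ l, v ∈ Cs) ∧ l ≠ [] ∧
    l.head? = some a ∧ l.getLast? = some b ∧ l.Nodup ∧
    ((l.zip l.tail).map fun p => hopDist E w h p.1 p.2).sum = x}

namespace SP9
variable {V : Type*}

def esum {β : Type*} [AddCommMonoid β] (f : V → V → β) (l : List V) : β :=
  ((l.zip l.tail).map fun p => f p.1 p.2).sum

@[simp] lemma esum_nil {β : Type*} [AddCommMonoid β] (f : V → V → β) : esum f ([] : List V) = 0 := rfl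
@[simp] lemma esum_single {β : Type*} [AddCommMonoid β] (f : V → V → β) (a : V) : esum f [a] = 0 := rfl
@[simp] lemma esum_cons_cons {β : Type*} [AddCommMonoid β] (f : V → V → β) (a b : V) (l : List V) :
    esum f (a :: b :: l) = f a b + esum f (b :: l) := rfl

lemma esum_split {β : Type*} [AddCommMonoid β] (f : V → V → β) (l1 l2 : List V) (a : V) :
    esum f (l1 ++ a :: l2) = esum f (l1 ++ [a]) + esum f (a :: l2) := by
  induction l1 with
  | nil => simp
  | cons x xs ih =>
    cases xs with
    | nil => simp [add_assoc]
    | cons y ys =>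
      simp only [List.cons_append, esum_cons_cons] at *
      rw [ih, add_assoc]

lemma chain'_pairs {E : V → V → Prop} : ∀ {l : List V}, l.Chain' E →
    ∀ p ∈ l.zip l.tail, E p.1 p.2
  | [], _, p, hp => by simp at hp
  | [a], _, p, hp => by simp at hp
  | a :: b :: l, hc, p, hp => by
    simp only [List.Chain'] at hc
    rw [List.isChain_cons_cons] at hc
    simp only [List.tail_cons, List.zip_cons_cons, List.mem_cons] at hp
    rcases hp with rfl | h
    · exact hc.1
    · exact chain'_pairs hc.2 p h

lemma zip_append_right_eq : ∀ (l m t : List V), m.length ≤ l.length → (l ++ t).zip m = l.zip m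
  | l, [], t, _ => by simp
  | [], m :: ms, t, h => by simp at h
  | a :: as, m :: ms, t, h => by
    simp only [List.cons_append, List.zip_cons_cons]
    rw [zip_append_right_eq as ms t (by simpa using h)]

lemma not_nodup_decomp : ∀ (l : List V), ¬ l.Nodup →
    ∃ (a : V) (l1 l2 l3 : List V), l = l1 ++ a :: (l2 ++ a :: l3)
  | [], h => by simp at h
  | x :: xs, h => by
    rw [List.nodup_cons] at h
    push_neg at h
    by_cases hx : x ∈ xs
    · obtain ⟨l2, l3, rfl⟩ := List.append_of_mem hx
      exact ⟨x, [], l2, l3, rfl⟩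
    · obtain ⟨a, l1, l2, l3, rfl⟩ := not_nodup_decomp xs (h hx)
      exact ⟨a, x :: l1, l2, l3, rfl⟩

lemma isWalk_split {E : V → V → Prop} {a b v : V} {l1 l2 : List V}
    (hw : IsWalk E a b (l1 ++ v :: l2)) :
    IsWalk E a v (l1 ++ [v]) ∧ IsWalk E v b (v :: l2) := by
  obtain ⟨-, hh, hl, hc⟩ := hw
  simp only [List.Chain'] at hc
  rw [List.isChain_split] at hc
  have hne : (v :: l2).getLast? = some ((v :: l2).getLast (by simp)) :=
    List.getLast?_eq_getLast _
  constructor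
  · refine ⟨by simp, ?_, ?_, hc.1⟩
    · rw [List.head?_append] at hh ⊢
      simpa using hh
    · rw [List.getLast?_append]
      simp
  · refine ⟨by simp, rfl, ?_, hc.2⟩
    rw [List.getLast?_append, hne] at hl
    simpa [hne] using hl


lemma head?_cases {l : List V} {v : V} (h : l.head? = some v) : ∃ t, l = v :: t := by
  cases l with
  | nil => simp at h
  | cons a t =>
    simp only [List.head?_cons, Option.some.injEq] at h
    exact ⟨t, by rw [h]⟩

lemma walkWeight_esum {w : V → V → ℝ} (l : List V) : walkWeight w l = esum w l := rfl

lemma esum_append_tail {β : Type*} [AddCommMonoid β] (f : V → V → β) {l1 l2 : List V} {v : V}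
    (h1 : l1.getLast? = some v) (h2 : l2.head? = some v) :
    esum f (l1 ++ l2.tail) = esum f l1 + esum f l2 := by
  obtain ⟨l2', rfl⟩ := head?_cases h2
  · have hne : l1 ≠ [] := by rintro rfl; simp at h1
    have hgl : l1.getLast hne = v := by
      have := List.getLast?_eq_getLast hne
      rw [this] at h1; exact Option.some_injective _ h1
    have hd : l1.dropLast ++ [v] = l1 := by rw [← hgl]; exact List.dropLast_append_getLast hne
    rw [List.tail_cons, ← hd, List.append_assoc]
    simp only [List.singleton_append]
    rw [esum_split]

lemma isWalk_append {E : V → V → Prop} {a v b : V} {l1 l2 : List V}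
    (h1 : IsWalk E a v l1) (h2 : IsWalk E v b l2) : IsWalk E a b (l1 ++ l2.tail) := by
  obtain ⟨hne1, hh1, hl1, hc1⟩ := h1
  obtain ⟨hne2, hh2, hl2, hc2⟩ := h2
  obtain ⟨l2', rfl⟩ := head?_cases hh2
  · have hgl : l1.getLast hne1 = v := by
      have := List.getLast?_eq_getLast hne1
      rw [this] at hl1; exact Option.some_injective _ hl1
    have hd : l1.dropLast ++ [v] = l1 := by rw [← hgl]; exact List.dropLast_append_getLast hne1
    refine ⟨by simp [hne1], ?_, ?_, ?_⟩
    · rw [List.tail_cons, List.head?_append, hh1]; rfl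
    · rw [List.tail_cons, ← hd, List.append_assoc, List.singleton_append,
        List.getLast?_append]
      have : (v :: l2').getLast? = some ((v :: l2').getLast (by simp)) :=
        List.getLast?_eq_getLast _
      rw [this] at hl2 ⊢
      simpa using hl2
    · rw [List.tail_cons, ← hd, List.append_assoc, List.singleton_append]
      simp only [List.Chain']
      rw [List.isChain_split]
      exact ⟨by rwa [hd], hc2⟩

lemma cycle_nonneg {E : V → V → Prop} {w : V → V → ℝ}
    (hNoNeg : ¬ ∃ l, IsCycle E l ∧ cycleWeight w l < 0)
    {x : V} {l2 : List V} (hc : ((x :: l2) ++ [x]).Chain' E) :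
    0 ≤ esum w ((x :: l2) ++ [x]) := by
  have hrot : (x :: l2).rotate 1 = l2 ++ [x] := by
    rw [List.rotate_cons_succ, List.rotate_zero]
  have hedges : cycleEdges (x :: l2) = ((x :: l2) ++ [x]).zip (((x :: l2) ++ [x]).tail) := by
    rw [cycleEdges, hrot]
    rw [List.cons_append, List.tail_cons]
    rw [← List.cons_append, zip_append_right_eq]
    simp
  have hW : cycleWeight w (x :: l2) = esum w ((x :: l2) ++ [x]) := by
    rw [cycleWeight, hedges]; rfl
  by_contra hlt
  push_neg at hlt
  refine hNoNeg ⟨x :: l2, ⟨by simp, fun p hp => ?_⟩, by rw [hW]; exact hlt⟩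
  exact chain'_pairs hc p (by rwa [hedges] at hp)

lemma pathify {E : V → V → Prop} {w : V → V → ℝ}
    (hNoNeg : ¬ ∃ l, IsCycle E l ∧ cycleWeight w l < 0) :
    ∀ (n : ℕ) (l : List V) (a b : V), l.length ≤ n → IsWalk E a b l →
    ∃ p, IsPath E a b p ∧ p.length ≤ l.length ∧ walkWeight w p ≤ walkWeight w l := by
  intro n
  induction n with
  | zero =>
    intro l a b hl hw
    exact absurd (List.length_eq_zero_iff.mp (Nat.le_zero.mp hl)) hw.1
  | succ n ih =>
    intro l a b hl hw
    by_cases hnd : l.Nodup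
    · exact ⟨l, ⟨hw, hnd⟩, le_rfl, le_rfl⟩
    · obtain ⟨x, l1, l2, l3, rfl⟩ := not_nodup_decomp l hnd
      have hsp1 := isWalk_split (l1 := l1) (l2 := l2 ++ x :: l3) (by exact hw)
      have h2' : IsWalk E x b ((x :: l2) ++ x :: l3) := hsp1.2
      have hsp2 := isWalk_split h2' 
      have hwalk : IsWalk E a b (l1 ++ x :: l3) := by
        have := isWalk_append hsp1.1 hsp2.2
        simpa [List.append_assoc] using this
      have hmid : 0 ≤ esum w ((x :: l2) ++ [x]) :=
        cycle_nonneg hNoNeg hsp2.1.2.2.2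
      have hwl : walkWeight w (l1 ++ x :: (l2 ++ x :: l3))
          = esum w (l1 ++ [x]) + (esum w (x :: l2 ++ [x]) + esum w (x :: l3)) := by
        rw [walkWeight_esum, esum_split]
        have e2 : esum w (x :: (l2 ++ x :: l3))
            = esum w (x :: l2 ++ [x]) + esum w (x :: l3) := esum_split w (x :: l2) l3 x
        rw [e2]
      have hwp : walkWeight w (l1 ++ x :: l3) = esum w (l1 ++ [x]) + esum w (x :: l3) := by
        rw [walkWeight_esum]
        exact esum_split w l1 l3 x
      have hlen : (l1 ++ x :: l3).length < (l1 ++ x :: (l2 ++ x :: l3)).length := by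
        simp [List.length_append]
      obtain ⟨p, hp, hpl, hpw⟩ := ih (l1 ++ x :: l3) a b (by omega) hwalk
      refine ⟨p, hp, by omega, ?_⟩
      rw [hwp] at hpw
      rw [hwl]
      linarith

lemma getLast?_append_cons (l1 : List V) (a : V) (l2 : List V) :
    (l1 ++ a :: l2).getLast? = (a :: l2).getLast? := by
  rw [List.getLast?_append]
  have h : (a :: l2).getLast? = some ((a :: l2).getLast (by simp)) :=
    List.getLast?_eq_getLast _
  rw [h]; rfl

lemma head?_append_cons (l1 : List V) (a : V) (l2 l2' : List V) :
    (l1 ++ a :: l2).head? = (l1 ++ a :: l2').head? := by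
  rw [List.head?_append, List.head?_append]; rfl

section Dist
variable [Fintype V] {E : V → V → Prop} {w : V → V → ℝ} {hp : ℕ}

lemma finite_distSet (f : List V → EReal) (P : List V → Prop) (hP : ∀ l, P l → l.Nodup) :
    {x : EReal | ∃ l, P l ∧ f l = x}.Finite := by
  apply Set.Finite.subset (Set.Finite.image f (List.finite_length_le V (Fintype.card V)))
  rintro x ⟨l, hl, rfl⟩
  exact ⟨l, (hP l hl).length_le_card, rfl⟩

lemma sInf_ne_bot' {S : Set EReal} (hS : S.Finite) (hb : ⊥ ∉ S) : sInf S ≠ ⊥ := by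
  rcases S.eq_empty_or_nonempty with rfl | hne
  · simp
  · intro h; exact hb (h ▸ hne.csInf_mem hS)

lemma pathDist_finite (a b : V) :
    {x : EReal | ∃ l, IsPath E a b l ∧ (walkWeight w l : EReal) = x}.Finite :=
  finite_distSet _ _ (fun _ hl => hl.2)

lemma pathDist_ne_bot (a b : V) : pathDist E w a b ≠ ⊥ := by
  apply sInf_ne_bot' (pathDist_finite a b)
  rintro ⟨l, -, hl⟩
  exact EReal.coe_ne_bot _ hl

lemma pathDist_le_walk (hNoNeg : ¬ ∃ l, IsCycle E l ∧ cycleWeight w l < 0)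
    {a b : V} {l : List V} (hw : IsWalk E a b l) :
    pathDist E w a b ≤ (walkWeight w l : EReal) := by
  obtain ⟨p, hp', -, hpw⟩ := pathify hNoNeg l.length l a b le_rfl hw
  calc pathDist E w a b ≤ (walkWeight w p : EReal) := sInf_le ⟨p, hp', rfl⟩
    _ ≤ _ := EReal.coe_le_coe_iff.mpr hpw

lemma pathDist_self (a : V) : pathDist E w a a = 0 := by
  have hmem : (0 : EReal) ∈ {x : EReal | ∃ l, IsPath E a a l ∧ (walkWeight w l : EReal) = x} :=
    ⟨[a], ⟨⟨by simp, rfl, rfl, List.isChain_singleton a⟩, by simp⟩, by simp [walkWeight]⟩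
  refine le_antisymm (sInf_le hmem) (le_sInf ?_)
  rintro x ⟨l, hl, rfl⟩
  obtain ⟨⟨hne, hh, hlast, -⟩, hnd⟩ := hl
  obtain ⟨t, rfl⟩ := head?_cases hh
  cases t with
  | nil => simp [walkWeight]
  | cons y ys =>
    exfalso
    rw [List.getLast?_cons_cons] at hlast
    have hmem' : a ∈ y :: ys := by
      have h := List.getLast?_eq_getLast (l := y :: ys) (by simp)
      rw [h] at hlast
      have := List.getLast_mem (l := y :: ys) (by simp)
      rwa [Option.some_injective _ hlast] at this
    rw [List.nodup_cons] at hnd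
    exact hnd.1 hmem'

lemma pathDist_triangle (hNoNeg : ¬ ∃ l, IsCycle E l ∧ cycleWeight w l < 0) (a b c : V) :
    pathDist E w a c ≤ pathDist E w a b + pathDist E w b c := by
  by_cases h1 : pathDist E w a b = ⊤
  · rw [h1, EReal.top_add_of_ne_bot (pathDist_ne_bot b c)]; exact le_top
  by_cases h2 : pathDist E w b c = ⊤
  · rw [h2, EReal.add_top_of_ne_bot (pathDist_ne_bot a b)]; exact le_top
  have hne1 : {x : EReal | ∃ l, IsPath E a b l ∧ (walkWeight w l : EReal) = x}.Nonempty := by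
    rcases Set.eq_empty_or_nonempty {x : EReal | ∃ l, IsPath E a b l ∧ (walkWeight w l : EReal) = x} with he | hne
    · exact absurd (by rw [pathDist, he, sInf_empty]) h1
    · exact hne
  have hne2 : {x : EReal | ∃ l, IsPath E b c l ∧ (walkWeight w l : EReal) = x}.Nonempty := by
    rcases Set.eq_empty_or_nonempty {x : EReal | ∃ l, IsPath E b c l ∧ (walkWeight w l : EReal) = x} with he | hne
    · exact absurd (by rw [pathDist, he, sInf_empty]) h2
    · exact hne
  obtain ⟨l1, hl1, hw1⟩ := hne1.csInf_mem (pathDist_finite a b)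
  obtain ⟨l2, hl2, hw2⟩ := hne2.csInf_mem (pathDist_finite b c)
  have hwalk : IsWalk E a c (l1 ++ l2.tail) := isWalk_append hl1.1 hl2.1
  have hww : walkWeight w (l1 ++ l2.tail) = walkWeight w l1 + walkWeight w l2 := by
    rw [walkWeight_esum, walkWeight_esum, walkWeight_esum]
    exact esum_append_tail w hl1.1.2.2.1 hl2.1.2.1
  calc pathDist E w a c ≤ (walkWeight w (l1 ++ l2.tail) : EReal) := pathDist_le_walk hNoNeg hwalk
    _ = (walkWeight w l1 : EReal) + (walkWeight w l2 : EReal) := by rw [hww, EReal.coe_add]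
    _ = pathDist E w a b + pathDist E w b c := by
      have e1 : pathDist E w a b = (walkWeight w l1 : EReal) := hw1.symm
      have e2 : pathDist E w b c = (walkWeight w l2 : EReal) := hw2.symm
      rw [e1, e2]

lemma pathDist_le_hopDist (a b : V) : pathDist E w a b ≤ hopDist E w hp a b := by
  apply le_sInf
  rintro x ⟨l, hl, -, rfl⟩
  exact sInf_le ⟨l, hl, rfl⟩

lemma hopDist_le_walk (hNoNeg : ¬ ∃ l, IsCycle E l ∧ cycleWeight w l < 0)
    {a b : V} {l : List V} (hw : IsWalk E a b l) (hlen : l.length - 1 ≤ hp) :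
    hopDist E w hp a b ≤ (walkWeight w l : EReal) := by
  obtain ⟨p, hp', hplen, hpw⟩ := pathify hNoNeg l.length l a b le_rfl hw
  calc hopDist E w hp a b ≤ (walkWeight w p : EReal) := sInf_le ⟨p, hp', by omega, rfl⟩
    _ ≤ _ := EReal.coe_le_coe_iff.mpr hpw

lemma pathDist_le_esum_hopDist (hNoNeg : ¬ ∃ l, IsCycle E l ∧ cycleWeight w l < 0) :
    ∀ (m : List V) (a b : V), m.head? = some a → m.getLast? = some b →
    pathDist E w a b ≤ esum (hopDist E w hp) m
  | [], a, b, hh, _ => by simp at hh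
  | [a'], a, b, hh, hl => by
    have h1 : a = a' := by simpa using hh.symm
    have h2 : b = a' := by simpa using hl.symm
    rw [h1, h2]
    simp [pathDist_self]
  | a' :: y :: ys, a, b, hh, hl => by
    have h1 : a = a' := by simpa using hh.symm
    rw [h1]
    rw [List.getLast?_cons_cons] at hl
    have ih := pathDist_le_esum_hopDist hNoNeg (y :: ys) y b rfl hl
    rw [esum_cons_cons]
    calc pathDist E w a' b ≤ pathDist E w a' y + pathDist E w y b :=
          pathDist_triangle hNoNeg a' y b
      _ ≤ hopDist E w hp a' y + esum (hopDist E w hp) (y :: ys) :=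
          add_le_add (pathDist_le_hopDist a' y) ih

lemma auxDist_le_esum (hNoNeg : ¬ ∃ l, IsCycle E l ∧ cycleWeight w l < 0) {Cs : Set V} :
    ∀ (n : ℕ) (m : List V) (a b : V), m.length ≤ n → (∀ v ∈ m, v ∈ Cs) → m ≠ [] →
    m.head? = some a → m.getLast? = some b →
    auxDist E w hp Cs a b ≤ esum (hopDist E w hp) m := by
  intro n
  induction n with
  | zero =>
    intro m a b hlen _ hne _ _
    exact absurd (List.length_eq_zero_iff.mp (Nat.le_zero.mp hlen)) hne
  | succ n ih =>
    intro m a b hlen hmem hne hh hl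
    by_cases hnd : m.Nodup
    · exact sInf_le ⟨m, hmem, hne, hh, hl, hnd, rfl⟩
    · obtain ⟨x, m1, m2, m3, rfl⟩ := not_nodup_decomp m hnd
      have hes : esum (hopDist E w hp) (m1 ++ x :: (m2 ++ x :: m3))
          = esum (hopDist E w hp) (m1 ++ [x]) +
            (esum (hopDist E w hp) (x :: m2 ++ [x]) + esum (hopDist E w hp) (x :: m3)) := by
        rw [esum_split]
        have e2 : esum (hopDist E w hp) (x :: (m2 ++ x :: m3))
            = esum (hopDist E w hp) (x :: m2 ++ [x]) + esum (hopDist E w hp) (x :: m3) :=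
          esum_split _ (x :: m2) m3 x
        rw [e2]
      have hes' : esum (hopDist E w hp) (m1 ++ x :: m3)
          = esum (hopDist E w hp) (m1 ++ [x]) + esum (hopDist E w hp) (x :: m3) :=
        esum_split _ m1 m3 x
      have hmid : (0 : EReal) ≤ esum (hopDist E w hp) (x :: m2 ++ [x]) := by
        have h0 := pathDist_le_esum_hopDist (hp := hp) hNoNeg (x :: m2 ++ [x]) x x
          (by simp) (by rw [getLast?_append_cons]; rfl)
        rwa [pathDist_self] at h0
      have hmem' : ∀ v ∈ m1 ++ x :: m3, v ∈ Cs := by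
        intro v hv
        apply hmem
        simp only [List.mem_append, List.mem_cons] at hv ⊢
        tauto
      have hh' : (m1 ++ x :: m3).head? = some a := by
        rw [head?_append_cons m1 x m3 (m2 ++ x :: m3)]; exact hh
      have hl' : (m1 ++ x :: m3).getLast? = some b := by
        rw [getLast?_append_cons]
        rw [getLast?_append_cons] at hl
        have e : (x :: (m2 ++ x :: m3)).getLast? = (x :: m3).getLast? :=
          getLast?_append_cons (x :: m2) x m3
        rw [e] at hl
        exact hl
      have hlendec : (m1 ++ x :: m3).length < (m1 ++ x :: (m2 ++ x :: m3)).length := by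
        simp only [List.length_append, List.length_cons]; omega
      have hih := ih (m1 ++ x :: m3) a b (by omega) hmem' (by simp) hh' hl'
      rw [hes]
      refine le_trans hih ?_
      rw [hes']
      have hle : esum (hopDist E w hp) (x :: m3) ≤
          esum (hopDist E w hp) (x :: m2 ++ [x]) + esum (hopDist E w hp) (x :: m3) :=
        le_add_of_nonneg_left hmid
      exact add_le_add_right hle _

lemma mem_of_getLast?' {l : List V} {x : V} (hx : l.getLast? = some x) : x ∈ l := by
  have hne : l ≠ [] := by rintro rfl; simp at hx
  rw [List.getLast?_eq_getLast hne] at hx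
  have := List.getLast_mem hne
  exact (Option.some_injective _ hx) ▸ this

lemma core [LinearOrder V] {E : V → V → Prop} {w : V → V → ℝ}
    (hNoNeg : ¬ ∃ l, IsCycle E l ∧ cycleWeight w l < 0)
    (s : V) (h : ℕ) (hh : 2 ≤ h) (C : Set V) (pi : V → V → List V)
    (hpi : ∀ u v : V, (∃ l, IsPath E u v l ∧ l.length - 1 ≤ h / 2) →
      (IsPath E u v (pi u v) ∧ (pi u v).length - 1 ≤ h / 2 ∧
       (∀ q, IsPath E u v q → q.length - 1 ≤ h / 2 →
          walkWeight w (pi u v) ≤ walkWeight w q) ∧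
       (∀ q, IsPath E u v q → q.length - 1 ≤ h / 2 →
          walkWeight w q = walkWeight w (pi u v) →
          pi u v = q ∨ List.Lex (· < ·) (pi u v) q)))
    (hHit : ∀ u v : V, (∃ l, IsPath E u v l ∧ l.length - 1 ≤ h / 2) →
      (pi u v).length - 1 = h / 2 → ∃ x ∈ C, x ∈ pi u v)
    (t : V) :
    ∀ (k : ℕ) (u : V) (l : List V), IsPath E u t l → l.length ≤ k →
    (∃ p, IsPath E u t p ∧ p.length - 1 ≤ h / 2 ∧ walkWeight w p ≤ walkWeight w l) ∨
    (∃ (x₀ xl : V) (pre xs : List V), x₀ ∈ C ∧ IsPath E u x₀ pre ∧ pre.length - 1 ≤ h / 2 ∧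
      (∀ c ∈ xs, c ∈ insert s C) ∧ (x₀ :: xs).getLast? = some xl ∧
      (walkWeight w pre : EReal) + esum (hopDist E w h) (x₀ :: xs) + hopDist E w h xl t
        ≤ (walkWeight w l : EReal)) := by
  intro k
  induction k with
  | zero =>
    intro u l hl hlen
    exact absurd (List.length_eq_zero_iff.mp (Nat.le_zero.mp hlen)) hl.1.1
  | succ k ih =>
    intro u l hl hlen
    by_cases hsmall : l.length - 1 ≤ h / 2
    · exact Or.inl ⟨l, hl, hsmall, le_rfl⟩
    push_neg at hsmall
    have hm1 : 1 ≤ h / 2 := by omega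
    have hlpos : 1 ≤ l.length := List.length_pos_iff.mpr hl.1.1
    have hlen2 : h / 2 + 2 ≤ l.length := by omega
    have hidx : h / 2 < l.length := by omega
    obtain ⟨A, v, B, hdec, hAlen⟩ : ∃ A v B, l = A ++ v :: B ∧ A.length = h / 2 := by
      refine ⟨l.take (h/2), l[h/2]'hidx, l.drop (h/2 + 1), ?_, by
        simp only [List.length_take]; omega⟩
      conv_lhs => rw [← List.take_append_drop (h/2) l]
      rw [List.drop_eq_getElem_cons hidx]
    subst hdec
    have hwin := isWalk_split hl.1
    have hndwin : (A ++ [v]).Nodup := by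
      have hsub : (A ++ [v]).Sublist (A ++ v :: B) :=
        List.Sublist.append_left (List.cons_sublist_cons.mpr (List.nil_sublist B)) A
      exact hsub.nodup hl.2
    have winPath : IsPath E u v (A ++ [v]) := ⟨hwin.1, hndwin⟩
    have restPath : IsPath E v t (v :: B) :=
      ⟨hwin.2, (List.sublist_append_right A (v :: B)).nodup hl.2⟩
    have hwinlen : (A ++ [v]).length - 1 = h / 2 := by simp [hAlen]
    have hex : ∃ l', IsPath E u v l' ∧ l'.length - 1 ≤ h / 2 :=
      ⟨A ++ [v], winPath, by omega⟩
    obtain ⟨hπpath, hπlen, hπmin, -⟩ := hpi u v hex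
    have hπpos : 1 ≤ (pi u v).length := List.length_pos_iff.mpr hπpath.1.1
    have hπw : walkWeight w (pi u v) ≤ walkWeight w (A ++ [v]) :=
      hπmin _ winPath (by omega)
    have hlsplit : walkWeight w (A ++ v :: B)
        = walkWeight w (A ++ [v]) + walkWeight w (v :: B) := by
      rw [walkWeight_esum, walkWeight_esum, walkWeight_esum]
      exact esum_split w A B v
    have hlenl : (A ++ v :: B).length = h / 2 + 1 + B.length := by simp [hAlen]; omega
    by_cases hexact : (pi u v).length - 1 = h / 2
    · -- window's pi has exactly h/2 edges: use the hitting set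
      obtain ⟨x₀, hx₀C, hx₀π⟩ := hHit u v hex hexact
      obtain ⟨π1, π2, hπdec⟩ := List.append_of_mem hx₀π
      have hπwalk : IsWalk E u v (π1 ++ x₀ :: π2) := by rw [← hπdec]; exact hπpath.1
      have hπnd : (π1 ++ x₀ :: π2).Nodup := by rw [← hπdec]; exact hπpath.2
      have hsplitπ := isWalk_split hπwalk
      have prePath : IsPath E u x₀ (π1 ++ [x₀]) := by
        refine ⟨hsplitπ.1, ?_⟩
        have hsub : (π1 ++ [x₀]).Sublist (π1 ++ x₀ :: π2) :=
          List.Sublist.append_left (List.cons_sublist_cons.mpr (List.nil_sublist π2)) π1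
        exact hsub.nodup hπnd
      have hπlens : π1.length + π2.length + 1 = (pi u v).length := by
        rw [hπdec]; simp; omega
      have hprelen : (π1 ++ [x₀]).length - 1 ≤ h / 2 := by simp; omega
      have hsuflen : π2.length ≤ h / 2 := by omega
      have hwπsplit : walkWeight w (pi u v)
          = walkWeight w (π1 ++ [x₀]) + walkWeight w (x₀ :: π2) := by
        rw [hπdec, walkWeight_esum, walkWeight_esum, walkWeight_esum]
        exact esum_split w π1 π2 x₀
      have hrestlen : (v :: B).length ≤ k := by
        simp only [List.length_cons]; omega
      rcases ih v (v :: B) restPath hrestlen with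
        ⟨p, hp, hplen, hpw⟩ | ⟨x₀', xl', pre', xs', hx₀'C, hpre', hpre'len, hxs', hlast', hsum'⟩
      · -- short remainder
        have hppos : 1 ≤ p.length := List.length_pos_iff.mpr hp.1.1
        have hwalk2 : IsWalk E x₀ t ((x₀ :: π2) ++ p.tail) := isWalk_append hsplitπ.2 hp.1
        have hwalk2len : ((x₀ :: π2) ++ p.tail).length - 1 ≤ h := by
          simp only [List.length_append, List.length_cons, List.length_tail]; omega
        have hwW2 : walkWeight w ((x₀ :: π2) ++ p.tail)
            = walkWeight w (x₀ :: π2) + walkWeight w p := by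
          rw [walkWeight_esum, walkWeight_esum, walkWeight_esum]
          exact esum_append_tail w hsplitπ.2.2.2.1 hp.1.2.1
        have hhop : hopDist E w h x₀ t
            ≤ ((walkWeight w (x₀ :: π2) + walkWeight w p : ℝ) : EReal) := by
          rw [← hwW2]
          exact hopDist_le_walk hNoNeg hwalk2 hwalk2len
        refine Or.inr ⟨x₀, x₀, π1 ++ [x₀], [], hx₀C, prePath, hprelen, by simp, rfl, ?_⟩
        rw [esum_single, add_zero]
        calc (walkWeight w (π1 ++ [x₀]) : EReal) + hopDist E w h x₀ t
            ≤ (walkWeight w (π1 ++ [x₀]) : EReal)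
              + ((walkWeight w (x₀ :: π2) + walkWeight w p : ℝ) : EReal) :=
              add_le_add_right hhop _
          _ = ((walkWeight w (π1 ++ [x₀]) + (walkWeight w (x₀ :: π2) + walkWeight w p) : ℝ) : EReal) := by
              norm_cast
          _ ≤ ((walkWeight w (A ++ v :: B) : ℝ) : EReal) := by
              rw [EReal.coe_le_coe_iff, hlsplit]
              have : walkWeight w p ≤ walkWeight w (v :: B) := hpw
              linarith [hwπsplit ▸ hπw]
      · -- long remainder: extend the chain
        have hpre'pos : 1 ≤ pre'.length := List.length_pos_iff.mpr hpre'.1.1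
        have hwalk3 : IsWalk E x₀ x₀' ((x₀ :: π2) ++ pre'.tail) :=
          isWalk_append hsplitπ.2 hpre'.1
        have hwalk3len : ((x₀ :: π2) ++ pre'.tail).length - 1 ≤ h := by
          simp only [List.length_append, List.length_cons, List.length_tail]; omega
        have hwW3 : walkWeight w ((x₀ :: π2) ++ pre'.tail)
            = walkWeight w (x₀ :: π2) + walkWeight w pre' := by
          rw [walkWeight_esum, walkWeight_esum, walkWeight_esum]
          exact esum_append_tail w hsplitπ.2.2.2.1 hpre'.1.2.1
        have hhop : hopDist E w h x₀ x₀'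
            ≤ ((walkWeight w (x₀ :: π2) + walkWeight w pre' : ℝ) : EReal) := by
          rw [← hwW3]
          exact hopDist_le_walk hNoNeg hwalk3 hwalk3len
        refine Or.inr ⟨x₀, xl', π1 ++ [x₀], x₀' :: xs', hx₀C, prePath, hprelen, ?_, ?_, ?_⟩
        · intro c hc
          rcases List.mem_cons.mp hc with rfl | hc'
          · exact Set.mem_insert_of_mem _ hx₀'C
          · exact hxs' c hc'
        · rw [List.getLast?_cons_cons]; exact hlast'
        · rw [esum_cons_cons]
          calc (walkWeight w (π1 ++ [x₀]) : EReal)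
                + (hopDist E w h x₀ x₀' + esum (hopDist E w h) (x₀' :: xs'))
                + hopDist E w h xl' t
              ≤ (walkWeight w (π1 ++ [x₀]) : EReal)
                + (((walkWeight w (x₀ :: π2) + walkWeight w pre' : ℝ) : EReal)
                  + esum (hopDist E w h) (x₀' :: xs'))
                + hopDist E w h xl' t := by
                refine add_le_add_left (add_le_add_right (add_le_add_left hhop _) _) _
            _ = ((walkWeight w (π1 ++ [x₀]) + walkWeight w (x₀ :: π2) : ℝ) : EReal)
                + ((walkWeight w pre' : EReal) + esum (hopDist E w h) (x₀' :: xs')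
                  + hopDist E w h xl' t) := by
                rw [EReal.coe_add, EReal.coe_add]
                abel
            _ ≤ ((walkWeight w (A ++ [v]) : ℝ) : EReal)
                + ((walkWeight w (v :: B) : ℝ) : EReal) := by
                refine add_le_add ?_ hsum'
                rw [EReal.coe_le_coe_iff]
                linarith [hwπsplit ▸ hπw]
            _ = ((walkWeight w (A ++ v :: B) : ℝ) : EReal) := by
                rw [← EReal.coe_add, hlsplit]
    · -- reroute through a shorter pi and recurse
      have hπlt : (pi u v).length ≤ h / 2 := by omega
      have hwalk : IsWalk E u t (pi u v ++ (v :: B).tail) := isWalk_append hπpath.1 hwin.2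
      have hwW : walkWeight w (pi u v ++ (v :: B).tail)
          = walkWeight w (pi u v) + walkWeight w (v :: B) := by
        rw [walkWeight_esum, walkWeight_esum, walkWeight_esum]
        exact esum_append_tail w hπpath.1.2.2.1 hwin.2.2.1
      obtain ⟨p, hp, hplen, hpw⟩ := pathify hNoNeg _ _ u t le_rfl hwalk
      have hplen' : p.length ≤ k := by
        have h1 : (pi u v ++ (v :: B).tail).length = (pi u v).length + B.length := by simp
        omega
      have hbound : walkWeight w p ≤ walkWeight w (A ++ v :: B) := by
        rw [hwW] at hpw
        rw [hlsplit]
        linarith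
      rcases ih u p hp hplen' with ⟨q, hq, hqlen, hqw⟩ |
        ⟨x₀, xl, pre, xs, hx₀C, hpre, hprelen, hxs, hlast, hsum⟩
      · exact Or.inl ⟨q, hq, hqlen, le_trans hqw hbound⟩
      · refine Or.inr ⟨x₀, xl, pre, xs, hx₀C, hpre, hprelen, hxs, hlast, ?_⟩
        exact le_trans hsum (EReal.coe_le_coe_iff.mpr hbound)
end Dist
end SP9

theorem stmt9 {V : Type*} [Fintype V] [LinearOrder V]
    (E : V → V → Prop) (w : V → V → ℝ)
    (hNoNeg : ¬ ∃ l, IsCycle E l ∧ cycleWeight w l < 0)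
    (s : V) (h : ℕ) (hh : 2 ≤ h) (C : Set V) (pi : V → V → List V)
    (hpi : ∀ u v : V, (∃ l, IsPath E u v l ∧ l.length - 1 ≤ h / 2) →
      (IsPath E u v (pi u v) ∧ (pi u v).length - 1 ≤ h / 2 ∧
       (∀ q, IsPath E u v q → q.length - 1 ≤ h / 2 →
          walkWeight w (pi u v) ≤ walkWeight w q) ∧
       (∀ q, IsPath E u v q → q.length - 1 ≤ h / 2 →
          walkWeight w q = walkWeight w (pi u v) →
          pi u v = q ∨ List.Lex (· < ·) (pi u v) q)))
    (hHit : ∀ u v : V, (∃ l, IsPath E u v l ∧ l.length - 1 ≤ h / 2) →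
      (pi u v).length - 1 = h / 2 → ∃ x ∈ C, x ∈ pi u v) :
    ∀ t : V, pathDist E w s t =
      ⨅ x ∈ insert s C, auxDist E w h (insert s C) s x + hopDist E w h x t := by
  intro t
  apply le_antisymm
  · -- pathDist ≤ every candidate
    refine le_iInf fun x => le_iInf fun hx => ?_
    have haux : pathDist E w s x ≤ auxDist E w h (insert s C) s x := by
      apply le_sInf
      rintro y ⟨m, hmem, hne, hh', hl', hnd, rfl⟩
      exact SP9.pathDist_le_esum_hopDist hNoNeg m s x hh' hl'
    calc pathDist E w s t ≤ pathDist E w s x + pathDist E w x t :=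
          SP9.pathDist_triangle hNoNeg s x t
      _ ≤ auxDist E w h (insert s C) s x + hopDist E w h x t :=
          add_le_add haux (SP9.pathDist_le_hopDist x t)
  · -- iInf ≤ pathDist
    apply le_sInf
    rintro y ⟨l, hlp, rfl⟩
    rcases SP9.core hNoNeg s h hh C pi hpi hHit t l.length s l hlp le_rfl with
      ⟨p, hp, hplen, hpw⟩ | ⟨x₀, xl, pre, xs, hx₀C, hpre, hprelen, hxs, hlast, hsum⟩
    · refine le_trans (iInf₂_le s (Set.mem_insert s C)) ?_
      have haux : auxDist E w h (insert s C) s s ≤ (0 : EReal) :=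
        sInf_le ⟨[s], by simp, by simp, rfl, rfl, by simp, by simp⟩
      have hhop : hopDist E w h s t ≤ ((walkWeight w p : ℝ) : EReal) :=
        sInf_le ⟨p, hp, by omega, rfl⟩
      calc auxDist E w h (insert s C) s s + hopDist E w h s t
          ≤ 0 + ((walkWeight w p : ℝ) : EReal) := add_le_add haux hhop
        _ = ((walkWeight w p : ℝ) : EReal) := zero_add _
        _ ≤ ((walkWeight w l : ℝ) : EReal) := EReal.coe_le_coe_iff.mpr hpw
    · have hxlmem : xl ∈ insert s C := by
        rcases List.mem_cons.mp (SP9.mem_of_getLast?' hlast) with rfl | hc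
        · exact Set.mem_insert_of_mem _ hx₀C
        · exact hxs _ hc
      refine le_trans (iInf₂_le xl hxlmem) ?_
      have hmem : ∀ c ∈ s :: x₀ :: xs, c ∈ insert s C := by
        intro c hc
        simp only [List.mem_cons] at hc
        rcases hc with h1 | h1 | h1
        · rw [h1]; exact Set.mem_insert s C
        · rw [h1]; exact Set.mem_insert_of_mem _ hx₀C
        · exact hxs _ h1
      have haux : auxDist E w h (insert s C) s xl
          ≤ SP9.esum (hopDist E w h) (s :: x₀ :: xs) :=
        SP9.auxDist_le_esum hNoNeg (s :: x₀ :: xs).length (s :: x₀ :: xs) s xl le_rfl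
          hmem (by simp) rfl (by rw [List.getLast?_cons_cons]; exact hlast)
      have hhop0 : hopDist E w h s x₀ ≤ ((walkWeight w pre : ℝ) : EReal) :=
        sInf_le ⟨pre, hpre, by omega, rfl⟩
      calc auxDist E w h (insert s C) s xl + hopDist E w h xl t
          ≤ SP9.esum (hopDist E w h) (s :: x₀ :: xs) + hopDist E w h xl t :=
            add_le_add_left haux _
        _ = hopDist E w h s x₀ + SP9.esum (hopDist E w h) (x₀ :: xs) + hopDist E w h xl t := by
            rw [SP9.esum_cons_cons]
        _ ≤ ((walkWeight w pre : ℝ) : EReal) + SP9.esum (hopDist E w h) (x₀ :: xs)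
              + hopDist E w h xl t := by
            exact add_le_add_left (add_le_add_left hhop0 _) _
        _ ≤ ((walkWeight w l : ℝ) : EReal) := hsum
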